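/- Let p be a probability distribution on I satisfying p(s) ≥ κ for all s ∈ I, where κ = e^{−2Jσ²}/|I| ∈ (0,1], and let δ = κ/(12σ). Then for every t ∈ [δ, 2π − δ], |Σ_{s∈I} p(s) e^{its}| ≤ exp(−κ² sin²(δ/2)). In particular this bound holds uniformly in the boundary condition ω for the single-spin Gibbs distributions p_x^ω(s) = e^{h_x^ω(s)}/Σ_{s'∈I} e^{h_x^ω(s')} whenever |h_x^ω(s)| ≤ Jσ² for all s ∈ I. -/

import Mathlib

open Finset

set_option maxHeartbeats 1600000 in
/-- Let `I = {m,…,n} ⊂ ℤ` (`m < n`), `σ = max_{s∈I}|s|`, `J ≥ 0`,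
`κ = e^{−2Jσ²}/|I| ∈ (0,1]`, `δ = κ/(12σ)`. If `p` is a probability distribution
on `I` with `p(s) ≥ κ` for all `s ∈ I`, then for every `t ∈ [δ, 2π − δ]`,
`|Σ_{s∈I} p(s) e^{its}| ≤ exp(−κ² sin²(δ/2))`. -/
theorem single_spin_charfun_bound
    (m n : ℤ) (hmn : m < n) (J σ κ δ : ℝ) (hJ : 0 ≤ J)
    (hσ : σ = max |(m : ℝ)| |(n : ℝ)|)
    (hκ : κ = Real.exp (-2 * J * σ ^ 2) / ((Finset.Icc m n).card : ℝ))
    (hδ : δ = κ / (12 * σ))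
    (p : ℤ → ℝ)
    (hp0 : ∀ s ∈ Finset.Icc m n, 0 ≤ p s)
    (hp1 : ∑ s ∈ Finset.Icc m n, p s = 1)
    (hpκ : ∀ s ∈ Finset.Icc m n, κ ≤ p s)
    (t : ℝ) (ht1 : δ ≤ t) (ht2 : t ≤ 2 * Real.pi - δ) :
    ‖∑ s ∈ Finset.Icc m n, (p s : ℂ) * Complex.exp (Complex.I * t * s)‖ ≤
      Real.exp (-(κ ^ 2 * Real.sin (δ / 2) ^ 2)) := by
  have hm : m ∈ Finset.Icc m n := Finset.mem_Icc.2 ⟨le_rfl, hmn.le⟩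
  have hm1 : m + 1 ∈ Finset.Icc m n := Finset.mem_Icc.2 ⟨by omega, by omega⟩
  have hσ1 : (1:ℝ) ≤ σ := by
    rw [hσ]
    rcases le_or_gt 1 n with h | h
    · refine le_trans ?_ (le_max_right _ _)
      rw [le_abs]; left; exact_mod_cast h
    · refine le_trans ?_ (le_max_left _ _)
      rw [le_abs]; right
      have : m ≤ -1 := by omega
      have : (m:ℝ) ≤ -1 := by exact_mod_cast this
      linarith
  have hcard1 : (1:ℝ) ≤ ((Finset.Icc m n).card : ℝ) := by
    have : 0 < (Finset.Icc m n).card := Finset.card_pos.2 ⟨m, hm⟩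
    exact_mod_cast this
  have hκpos : 0 < κ := by
    rw [hκ]; exact div_pos (Real.exp_pos _) (by linarith)
  have hκ1 : κ ≤ 1 := by
    rw [hκ]
    apply div_le_one_of_le₀
    · calc Real.exp (-2 * J * σ ^ 2) ≤ 1 := Real.exp_le_one_iff.2 (by nlinarith)
        _ ≤ _ := hcard1
    · linarith
  have hδpos : 0 < δ := by
    rw [hδ]; exact div_pos hκpos (by linarith)
  have hδ12 : δ ≤ 1/12 := by
    rw [hδ, div_le_div_iff₀ (by linarith) (by norm_num)]
    nlinarith
  have hpi := Real.pi_gt_three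
  -- sin comparisons
  have hsd0 : 0 ≤ Real.sin (δ/2) :=
    Real.sin_nonneg_of_nonneg_of_le_pi (by linarith) (by linarith)
  have hsd1 : Real.sin (δ/2) ≤ 1 := Real.sin_le_one _
  have hs2d : Real.sin (δ/2) ≤ Real.sin (t/2) := by
    rcases le_or_gt (t/2) (Real.pi/2) with h | h
    · exact Real.strictMonoOn_sin.monotoneOn ⟨by linarith, by linarith⟩
        ⟨by linarith, h⟩ (by linarith)
    · rw [← Real.sin_pi_sub (t/2)]
      exact Real.strictMonoOn_sin.monotoneOn ⟨by linarith, by linarith⟩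
        ⟨by linarith, by linarith⟩ (by linarith)
  -- abbreviations
  set a := p m with ha_def
  set b := p (m+1) with hb_def
  have ha : κ ≤ a := hpκ m hm
  have hb : κ ≤ b := hpκ (m+1) hm1
  have hne : m ≠ m + 1 := by omega
  have hsub : ({m, m+1} : Finset ℤ) ⊆ Finset.Icc m n :=
    Finset.insert_subset_iff.2 ⟨hm, Finset.singleton_subset_iff.2 hm1⟩
  have hrest : ∑ s ∈ Finset.Icc m n \ {m, m+1}, p s = 1 - a - b := by
    have h1 := Finset.sum_sdiff (f := p) hsub
    rw [Finset.sum_pair hne, hp1] at h1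
    linarith
  have hrest0 : (0:ℝ) ≤ 1 - a - b := by
    rw [← hrest]
    exact Finset.sum_nonneg fun s hs => hp0 s (Finset.mem_sdiff.1 hs).1
  have hab1 : a + b ≤ 1 := by
    have := hrest0; linarith
  -- the complex sum split
  set f : ℤ → ℂ := fun s => (p s : ℂ) * Complex.exp (Complex.I * t * s) with hf_def
  have hsplitC : ∑ s ∈ Finset.Icc m n, f s
      = (∑ s ∈ Finset.Icc m n \ {m, m+1}, f s) + (f m + f (m+1)) := by
    rw [← Finset.sum_pair (f := f) hne, Finset.sum_sdiff hsub]
  have habs_exp : ∀ s : ℤ, ‖Complex.exp (Complex.I * t * s)‖ = 1 := by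
    intro s
    rw [show Complex.I * (t:ℂ) * (s:ℂ) = ((t * s : ℝ) : ℂ) * Complex.I by push_cast; ring]
    exact Complex.norm_exp_ofReal_mul_I _
  have habs_f : ∀ s ∈ Finset.Icc m n, ‖f s‖ = p s := by
    intro s hs
    rw [hf_def]
    simp only [norm_mul, Complex.norm_real, Real.norm_eq_abs, habs_exp, mul_one, abs_of_nonneg (hp0 s hs)]
  -- the pair term
  have hfm : f m + f (m+1)
      = Complex.exp (Complex.I * t * m) * ((a:ℂ) + (b:ℂ) * Complex.exp (Complex.I * t)) := by
    simp only [hf_def]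
    rw [show Complex.I * (t:ℂ) * ((m:ℤ):ℂ) = Complex.I * t * m by push_cast; ring,
        show Complex.I * (t:ℂ) * (((m+1:ℤ)):ℂ) = Complex.I*t*m + Complex.I*t by push_cast; ring,
        Complex.exp_add]
    ring
  set A := ‖(a:ℂ) + (b:ℂ) * Complex.exp (Complex.I * t)‖ with hA_def
  have hA0 : 0 ≤ A := norm_nonneg _
  have hz : ((a:ℂ) + (b:ℂ) * Complex.exp (Complex.I * t))
      = ((a + b * Real.cos t : ℝ) : ℂ) + ((b * Real.sin t : ℝ):ℂ) * Complex.I := by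
    rw [show Complex.I * (t:ℂ) = (t:ℂ) * Complex.I from by ring, Complex.exp_mul_I,
        ← Complex.ofReal_cos, ← Complex.ofReal_sin]
    push_cast; ring
  have hA2 : A ^ 2 = (a + b * Real.cos t)^2 + (b * Real.sin t)^2 := by
    rw [hA_def, Complex.sq_norm, hz, Complex.normSq_add_mul_I]
  have hcost : Real.cos t = 1 - 2 * Real.sin (t/2) ^ 2 := by
    have h1 := Real.cos_two_mul (t/2)
    have h2 := Real.cos_sq' (t/2)
    have h3 : (2:ℝ) * (t/2) = t := by ring
    rw [h3] at h1
    linarith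
  have hsc : Real.sin t ^ 2 = 1 - Real.cos t ^ 2 := by
    have := Real.sin_sq_add_cos_sq t
    linarith
  have hA2' : A ^ 2 = (a+b)^2 - 4*a*b*(Real.sin (t/2))^2 := by
    rw [hA2]
    linear_combination b^2 * hsc + 2*a*b*hcost
  set x := 2 * κ^2 * Real.sin (δ/2) ^ 2 with hx_def
  have hx0 : 0 ≤ x := by positivity
  have hab0 : (0:ℝ) ≤ a * b := mul_nonneg (hκpos.le.trans ha) (hκpos.le.trans hb)
  have habk : κ^2 ≤ a * b := by
    rw [sq]; exact mul_le_mul ha hb hκpos.le (hκpos.le.trans ha)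
  have hsdsq1 : Real.sin (δ/2)^2 ≤ 1 := by
    have := mul_le_one₀ hsd1 hsd0 hsd1
    nlinarith [this]
  have hκsq : κ^2 ≤ κ := by
    rw [sq]; exact mul_le_of_le_one_left hκpos.le hκ1
  have hC0 : 0 ≤ a + b - x := by
    have h1 : x ≤ 2*κ^2 := mul_le_of_le_one_right (by positivity) hsdsq1
    have h2 : 2*κ ≤ a + b := by linarith
    linarith
  have hs2sq : Real.sin (δ/2)^2 ≤ Real.sin (t/2)^2 := pow_le_pow_left₀ hsd0 hs2d 2
  have hAC : A^2 ≤ (a + b - x)^2 := by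
    rw [hA2']
    have h2 : x ≤ 2*(a*b)*(Real.sin (t/2))^2 := by
      have h3 := mul_le_mul habk hs2sq (sq_nonneg _) hab0
      rw [hx_def]; linarith
    linarith [sq_nonneg x, mul_nonneg hx0 (sub_nonneg.2 hab1)]
  have hAle : A ≤ a + b - x := by
    have h := Real.sqrt_le_sqrt hAC
    rwa [Real.sqrt_sq hA0, Real.sqrt_sq hC0] at h
  -- triangle inequality
  have htri : ‖∑ s ∈ Finset.Icc m n, f s‖ ≤ (1 - a - b) + A := by
    rw [hsplitC]
    refine le_trans (norm_add_le _ _) ?_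
    have h1 : ‖∑ s ∈ Finset.Icc m n \ {m, m+1}, f s‖ ≤ 1 - a - b := by
      refine le_trans (norm_sum_le _ _) ?_
      rw [← hrest]
      exact le_of_eq (Finset.sum_congr rfl fun s hs => habs_f s (Finset.mem_sdiff.1 hs).1)
    have h2 : ‖f m + f (m+1)‖ = A := by
      rw [hfm, norm_mul, habs_exp m, one_mul]
    rw [h2]
    linarith
  have hfinal : ‖∑ s ∈ Finset.Icc m n, f s‖ ≤ 1 - x := by linarith
  calc ‖∑ s ∈ Finset.Icc m n, (p s : ℂ) * Complex.exp (Complex.I * t * s)‖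
      ≤ 1 - x := hfinal
    _ ≤ Real.exp (-x) := by linarith [Real.add_one_le_exp (-x)]
    _ ≤ Real.exp (-(κ ^ 2 * Real.sin (δ / 2) ^ 2)) := by
        apply Real.exp_le_exp.2
        have h4 : (0:ℝ) ≤ κ^2 * Real.sin (δ/2)^2 := by positivity
        rw [hx_def]; linarith
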